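/- Assume q = 1 (so ∂L_{FS} = ∂L_F). Then the following are equivalent: (a) c_S ≥ 4 c_F; (b) for every n ∈ ℕ, every configuration D^w_n = {w₁, …, w_n} ⊂ ∂L_{FS} with w_{i+1} = w_i + t₁ for i = 1, …, n−1 satisfies both (i) V_n(D^w_n) = min{V_n(D) : D ∈ C_n} and (ii) V_n(D^w_n) < V_n(D_n) for every D_n ∈ C_n which either contains an atom outside ∂L_{FS}, or is contained in ∂L_{FS} but is not a set of n consecutive sites (i.e. cannot be written as {w, w + t₁, …, w + (n−1)t₁}). -/

import Mathlib

open scoped BigOperators Classical Topology ENNReal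
open Filter MeasureTheory

noncomputable section

/-!
Common setting: film lattice `L_F` with parameter `e_F = 1`, substrate spacing
`e_S = q/p` (`p, q` coprime positive integers), Heitmann–Radin potentials and the
configurational energy `V_n` (with values in `EReal`, since the Heitmann–Radin
potential takes the value `+∞` below distance `1`).
-/

/-- Points of the plane. -/
abbrev Pt : Type := ℝ × ℝ

/-- The lattice vector `t₁ = (1,0)`. -/
def t1 : Pt := ((1 : ℝ), (0 : ℝ))

/-- The lattice vector `t₂ = (1/2, √3/2)`. -/
def t2 : Pt := ((1 / 2 : ℝ), Real.sqrt 3 / 2)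

/-- Euclidean distance on `ℝ × ℝ`. -/
def dE (x y : Pt) : ℝ := Real.sqrt ((x.1 - y.1) ^ 2 + (x.2 - y.2) ^ 2)

/-- Substrate lattice spacing `e_S = q / p`. -/
def eS (p q : ℕ) : ℝ := (q : ℝ) / (p : ℝ)

/-- The film lattice `L_F = {(0, e_S) + k₁ t₁ + k₂ t₂ : k₁ ∈ ℤ, k₂ ∈ ℕ ∪ {0}}`. -/
def LF (p q : ℕ) : Set Pt :=
  {x | ∃ (k₁ : ℤ) (k₂ : ℕ), x = (((0 : ℝ), eS p q) : Pt) + (k₁ : ℝ) • t1 + (k₂ : ℝ) • t2}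

/-- The set `∂L_{FS} = {(k q, e_S) : k ∈ ℤ}` of lower-boundary film sites lying at
distance `e_S` above a substrate atom. -/
def bLFS (p q : ℕ) : Set Pt := {x | ∃ k : ℤ, x = (((k : ℝ) * (q : ℝ), eS p q) : Pt)}

/-- Crystalline configurations with `n` atoms: subsets of `L_F` of cardinality `n`. -/
def Cn (p q n : ℕ) : Set (Finset Pt) := {D | ↑D ⊆ LF p q ∧ D.card = n}

/-- The Heitmann–Radin sticky-disc potential: `+∞` for `r < 1`, `-c_F` at `r = 1`,
`0` for `r > 1`. -/
def vF (cF : ℝ) (r : ℝ) : EReal :=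
  if r < 1 then (⊤ : EReal) else if r = 1 then ((-cF : ℝ) : EReal) else (0 : EReal)

/-- The one-body substrate potential `v¹`: `-c_S` on `∂L_{FS}`, `0` otherwise. -/
def v1 (cS : ℝ) (p q : ℕ) (x : Pt) : ℝ := if x ∈ bLFS p q then -cS else 0

/-- The total energy `V_n(D) = Σ_{(x,y) ∈ D×D, x ≠ y} v_F(|x-y|) + Σ_{x ∈ D} v¹(x)`. -/
def Vn (cF cS : ℝ) (p q : ℕ) (D : Finset Pt) : EReal :=
  (∑ e ∈ D.offDiag, vF cF (dE e.1 e.2)) + (((∑ x ∈ D, v1 cS p q x) : ℝ) : EReal)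

/-- The dewetting condition: `c_S < 4c_F` if `q = 1` and `c_S < 6c_F` if `q ≠ 1`. -/
def Dewetting (cF cS : ℝ) (q : ℕ) : Prop := if q = 1 then cS < 4 * cF else cS < 6 * cF

/-- The boundary `∂D` of a configuration: atoms with fewer than `6` film neighbours. -/
def bdry (D : Finset Pt) : Finset Pt :=
  D.filter fun x => (D.filter fun y => dE x y = 1).card < 6

/-- The empirical measure `μ_{D_n} = (1/n) Σ_{x ∈ D_n} δ_{x/√n}`. -/
def emp (n : ℕ) (D : Finset Pt) : Measure Pt :=
  ((n : ℝ≥0∞))⁻¹ • ∑ x ∈ D, Measure.dirac (((Real.sqrt n)⁻¹ : ℝ) • x)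

/-- A configuration of `n` consecutive sites `{w, w + t₁, …, w + (n-1) t₁}` on `∂L_{FS}`. -/
def IsConsecutive (p q n : ℕ) (Dw : Finset Pt) : Prop :=
  ∃ w : Pt, w ∈ bLFS p q ∧ Dw = (Finset.range n).image fun i => w + (i : ℝ) • t1

/-- Two atoms joined by a chain of atoms of `D` with consecutive distances `1`. -/
def chainConn (D : Finset Pt) (x y : Pt) : Prop :=
  Relation.ReflTransGen (fun a b => a ∈ D ∧ b ∈ D ∧ dE a b = 1) x y

/-- Connectedness of a configuration. -/
def IsConnectedConf (D : Finset Pt) : Prop := ∀ x ∈ D, ∀ y ∈ D, chainConn D x y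

/-- `C` is a connected component of `D` (the set of atoms of `D` chain-connected to
some atom of `D`). -/
def IsComponent (D C : Finset Pt) : Prop :=
  ∃ x ∈ D, ∀ y : Pt, y ∈ C ↔ y ∈ D ∧ chainConn D x y

/-- Almost-connectedness: connected if `q = 1`; if `q ≠ 1`, the connected components
can be enumerated so that each one is at distance at most `q` from the union of the
previous ones. -/
def AlmostConnected (q : ℕ) (D : Finset Pt) : Prop :=
  if q = 1 then IsConnectedConf D
  else
    ∃ (k : ℕ) (f : Fin k → Finset Pt),
      Function.Injective f ∧
      (∀ i, IsComponent D (f i)) ∧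
      (∀ C : Finset Pt, IsComponent D C → ∃ i, C = f i) ∧
      (∀ i : Fin k, 1 ≤ (i : ℕ) →
        ∃ x ∈ f i, ∃ j : Fin k, j < i ∧ ∃ y ∈ f j, dE x y ≤ (q : ℝ))

/-- Local energy `E_loc(x)` of a site with respect to the configuration `D`. -/
def Eloc (cF : ℝ) (D : Finset Pt) (x : Pt) : ℝ :=
  if x ∈ D then cF * (6 - ((D.filter fun y => dE x y = 1).card : ℝ)) else 0

/-- Height `y_M` of the topmost atom of `D` in the column of `x`. -/
def yM (D : Finset Pt) (x : Pt) : ℝ := sSup {y : ℝ | ((x.1, y) : Pt) ∈ D}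

/-- The strip top `x̃ = (x¹, y_M)`. -/
def til (D : Finset Pt) (x : Pt) : Pt := (x.1, yM D x)

/-- The weight `w₊(x̃)`. -/
def wPlus (p q : ℕ) (D : Finset Pt) (x : Pt) : ℝ :=
  if x + t1 ∈ D ∧ x + t1 ∈ bLFS p q ∧ til D x + t2 = til D (x + t1) + t2 - t1 then 1 / 2 else 1

/-- The weight `w₋(x̃)`. -/
def wMinus (p q : ℕ) (D : Finset Pt) (x : Pt) : ℝ :=
  if x - t1 ∈ D ∧ x - t1 ∈ bLFS p q ∧ til D x + t2 - t1 = til D (x - t1) + t2 then 1 / 2 else 1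

/-- Lower strip energy `E_strip,below(x)`. -/
def EStripBelow (cF cS : ℝ) (p q : ℕ) (D : Finset Pt) (x : Pt) : ℝ :=
  if q = 1 then
    (1 / 2) * Eloc cF D x + (1 / 4) * Eloc cF D (x + t1) + (1 / 4) * Eloc cF D (x - t1) - cS
  else
    Eloc cF D x + (1 / 2) * Eloc cF D (x + t1) + (1 / 2) * Eloc cF D (x - t1) - cS

/-- Upper strip energy `E_strip,above(x)`. -/
def EStripAbove (cF : ℝ) (p q : ℕ) (D : Finset Pt) (x : Pt) : ℝ :=
  (if til D x ≠ x then Eloc cF D (til D x) else 0) +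
    wPlus p q D x * Eloc cF D (til D x + t2) +
    wMinus p q D x * Eloc cF D (til D x + t2 - t1)

/-- The strip energy `E_strip(x) = E_strip,below(x) + E_strip,above(x)`. -/
def EStrip (cF cS : ℝ) (p q : ℕ) (D : Finset Pt) (x : Pt) : ℝ :=
  EStripBelow cF cS p q D x + EStripAbove cF p q D x

/-- `Δ_strip`: `4c_F - c_S` if `q = 1`, `6c_F - c_S` if `q ≠ 1`. -/
def DeltaStrip (cF cS : ℝ) (q : ℕ) : ℝ := if q = 1 then 4 * cF - cS else 6 * cF - cS

/-- The union `S(∂L_{FS})` of all strips of the configuration `D`. -/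
def SLFS (p q : ℕ) (D : Finset Pt) : Finset Pt :=
  D.filter fun y => ∃ x, x ∈ D ∧ x ∈ bLFS p q ∧
    (y = x ∨ y = x + t1 ∨ y = x - t1 ∨ y = til D x ∨ y = til D x + t2 ∨ y = til D x + t2 - t1)

/-- The rescaled energy `E_n(μ_{D_n}) = n^{-1/2} (V_n(D_n) + 6 c_F n)`. -/
def En (cF cS : ℝ) (p q n : ℕ) (D : Finset Pt) : EReal :=
  ((((Real.sqrt n)⁻¹ : ℝ)) : EReal) * (Vn cF cS p q D + ((6 * cF * (n : ℝ) : ℝ) : EReal))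
section Aux

lemma ereal_coe_sum {α : Type*} (s : Finset α) (f : α → ℝ) :
    ((∑ a ∈ s, f a : ℝ) : EReal) = ∑ a ∈ s, ((f a : ℝ) : EReal) := by
  classical
  induction s using Finset.cons_induction with
  | empty => simp
  | cons a s ha ih => rw [Finset.sum_cons, Finset.sum_cons, EReal.coe_add, ih]

lemma dE_symm (x y : Pt) : dE x y = dE y x := by
  unfold dE; ring_nf

/-- Lattice parametrization. -/
def phi (c : ℝ) (k : ℤ × ℕ) : Pt :=
  ((k.1 : ℝ) + (k.2 : ℝ) / 2, c + (k.2 : ℝ) * (Real.sqrt 3 / 2))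

lemma sqrt3_pos : (0:ℝ) < Real.sqrt 3 := Real.sqrt_pos.mpr (by norm_num)

lemma phi_inj (c : ℝ) : Function.Injective (phi c) := by
  rintro ⟨a1, a2⟩ ⟨b1, b2⟩ h
  have h2 : (a2 : ℝ) * (Real.sqrt 3 / 2) = (b2 : ℝ) * (Real.sqrt 3 / 2) := by
    have := congrArg Prod.snd h
    simpa [phi] using this
  have ha2 : (a2 : ℝ) = b2 := by
    have hne : (Real.sqrt 3 / 2 : ℝ) ≠ 0 := by positivity
    exact mul_right_cancel₀ hne h2
  have h1 : (a1 : ℝ) + (a2:ℝ)/2 = (b1:ℝ) + (b2:ℝ)/2 := by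
    have := congrArg Prod.fst h
    simpa [phi] using this
  have : (a1 : ℝ) = b1 := by rw [ha2] at h1; linarith
  have e1 : a1 = b1 := by exact_mod_cast this
  have e2 : a2 = b2 := by exact_mod_cast ha2
  simp [e1, e2]

lemma mem_LF_iff {p q : ℕ} {x : Pt} : x ∈ LF p q ↔ ∃ k : ℤ × ℕ, x = phi (eS p q) k := by
  constructor
  · rintro ⟨k1, k2, rfl⟩
    exact ⟨(k1, k2), by simp [phi, t1, t2, Prod.ext_iff]; constructor <;> ring⟩
  · rintro ⟨⟨k1, k2⟩, rfl⟩
    exact ⟨k1, k2, by simp [phi, t1, t2, Prod.ext_iff]; constructor <;> ring⟩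

/-- The integer quadratic form giving squared distances. -/
def Q (a b : ℤ) : ℤ := a ^ 2 + a * b + b ^ 2

lemma Q_nonneg (a b : ℤ) : 0 ≤ Q a b := by unfold Q; nlinarith [sq_nonneg (2*a+b), sq_nonneg b]

lemma Q_pos {a b : ℤ} (h : ¬(a = 0 ∧ b = 0)) : 1 ≤ Q a b := by
  rcases lt_or_ge 0 (Q a b) with h1 | h1
  · omega
  · exfalso
    have h0 : Q a b = 0 := le_antisymm h1 (Q_nonneg a b)
    unfold Q at h0
    have hb : b = 0 := by nlinarith [sq_nonneg (2*a+b), sq_nonneg b]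
    have ha : a = 0 := by nlinarith [sq_nonneg (2*a+b), sq_nonneg b]
    exact h ⟨ha, hb⟩

lemma dE_phi (c : ℝ) (k l : ℤ × ℕ) :
    dE (phi c k) (phi c l) = Real.sqrt ((Q (k.1 - l.1) ((k.2:ℤ) - (l.2:ℤ)) : ℤ) : ℝ) := by
  unfold dE phi Q
  congr 1
  have h3 : Real.sqrt 3 ^ 2 = 3 := Real.sq_sqrt (by norm_num)
  push_cast
  nlinarith [h3]

/-- Neighbour relation on lattice coordinates. -/
def nbr (k l : ℤ × ℕ) : Prop := Q (k.1 - l.1) ((k.2:ℤ) - (l.2:ℤ)) = 1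

instance : DecidablePred (fun e : (ℤ × ℕ) × (ℤ × ℕ) => nbr e.1 e.2) := by
  unfold nbr; infer_instance

lemma dE_phi_eq_one_iff {c : ℝ} {k l : ℤ × ℕ} :
    dE (phi c k) (phi c l) = 1 ↔ nbr k l := by
  rw [dE_phi, Real.sqrt_eq_one]
  unfold nbr
  exact ⟨fun h => by exact_mod_cast h, fun h => by exact_mod_cast h⟩

lemma one_le_dE_phi {c : ℝ} {k l : ℤ × ℕ} (h : k ≠ l) :
    1 ≤ dE (phi c k) (phi c l) := by
  rw [dE_phi]
  have hQ : 1 ≤ Q (k.1 - l.1) ((k.2:ℤ) - (l.2:ℤ)) := by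
    apply Q_pos
    rintro ⟨h1, h2⟩
    apply h
    have : k.1 = l.1 := by omega
    have : k.2 = l.2 := by omega
    exact Prod.ext (by omega) this
  rw [show (1:ℝ) = Real.sqrt 1 from Real.sqrt_one.symm]
  apply Real.sqrt_le_sqrt
  exact_mod_cast hQ

end Aux
section Energy

lemma phi_mem_bLFS_iff {p : ℕ} {k : ℤ × ℕ} :
    phi (eS p 1) k ∈ bLFS p 1 ↔ k.2 = 0 := by
  constructor
  · rintro ⟨m, hm⟩
    have h2 := congrArg Prod.snd hm
    simp only [phi] at h2
    have : (k.2 : ℝ) * (Real.sqrt 3 / 2) = 0 := by linarith [h2]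
    have hne : (Real.sqrt 3 / 2 : ℝ) ≠ 0 := by have := sqrt3_pos; positivity
    have : (k.2 : ℝ) = 0 := by
      rcases mul_eq_zero.mp this with h | h
      · exact h
      · exact absurd h hne
    exact_mod_cast this
  · intro h
    exact ⟨k.1, by simp [phi, h, Prod.ext_iff]⟩

lemma one_le_dE_LF {p q : ℕ} {x y : Pt} (hx : x ∈ LF p q) (hy : y ∈ LF p q)
    (hxy : x ≠ y) : 1 ≤ dE x y := by
  rw [mem_LF_iff] at hx hy
  obtain ⟨k, rfl⟩ := hx
  obtain ⟨l, rfl⟩ := hy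
  exact one_le_dE_phi (fun h => hxy (by rw [h]))

/-- Real-valued energy (valid when no pair is at distance `< 1`). -/
def realVn (cF cS : ℝ) (p q : ℕ) (D : Finset Pt) : ℝ :=
  (∑ e ∈ D.offDiag, if dE e.1 e.2 = 1 then -cF else 0) + ∑ x ∈ D, v1 cS p q x

lemma Vn_eq_realVn {cF cS : ℝ} {p q : ℕ} {D : Finset Pt}
    (h : ∀ e ∈ D.offDiag, (1:ℝ) ≤ dE e.1 e.2) :
    Vn cF cS p q D = ((realVn cF cS p q D : ℝ) : EReal) := by
  unfold Vn realVn
  rw [EReal.coe_add]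
  congr 1
  rw [ereal_coe_sum]
  apply Finset.sum_congr rfl
  intro e he
  have h1 := h e he
  unfold vF
  rw [if_neg (not_lt.mpr h1)]
  split_ifs <;> simp

lemma Vn_eq_realVn_of_LF {cF cS : ℝ} {p q : ℕ} {D : Finset Pt}
    (h : ↑D ⊆ LF p q) :
    Vn cF cS p q D = ((realVn cF cS p q D : ℝ) : EReal) := by
  apply Vn_eq_realVn
  intro e he
  rw [Finset.mem_offDiag] at he
  exact one_le_dE_LF (h he.1) (h he.2.1) he.2.2

lemma realVn_insert {cF cS : ℝ} {p q : ℕ} {D : Finset Pt} {x : Pt} (hx : x ∉ D) :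
    realVn cF cS p q (insert x D) =
      realVn cF cS p q D + 2 * (∑ y ∈ D, if dE x y = 1 then -cF else 0)
        + v1 cS p q x := by
  have d1 : Disjoint (D.offDiag ∪ {x} ×ˢ D) (D ×ˢ {x}) := by
    rw [Finset.disjoint_left]
    rintro ⟨a, b⟩ hab hab'
    simp only [Finset.mem_product, Finset.mem_singleton] at hab'
    rcases Finset.mem_union.mp hab with h | h
    · rw [Finset.mem_offDiag] at h
      exact hx (hab'.2 ▸ h.2.1)
    · simp only [Finset.mem_product, Finset.mem_singleton] at h
      exact hx (hab'.2 ▸ h.2)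
  have d2 : Disjoint D.offDiag ({x} ×ˢ D) := by
    rw [Finset.disjoint_left]
    rintro ⟨a, b⟩ hab hab'
    simp only [Finset.mem_product, Finset.mem_singleton] at hab'
    rw [Finset.mem_offDiag] at hab
    exact hx (hab'.1 ▸ hab.1)
  unfold realVn
  rw [Finset.offDiag_insert hx, Finset.sum_union d1, Finset.sum_union d2,
    Finset.sum_insert hx]
  have h1 : ∑ e ∈ ({x} ×ˢ D), (if dE e.1 e.2 = 1 then -cF else (0:ℝ))
      = ∑ y ∈ D, (if dE x y = 1 then -cF else 0) := by
    rw [Finset.singleton_product, Finset.sum_map]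
    rfl
  have h2 : ∑ e ∈ (D ×ˢ {x}), (if dE e.1 e.2 = 1 then -cF else (0:ℝ))
      = ∑ y ∈ D, (if dE x y = 1 then -cF else 0) := by
    rw [Finset.sum_product]
    simp only [Finset.sum_singleton]
    exact Finset.sum_congr rfl fun y _ => by rw [dE_symm]
  rw [h1, h2]
  ring

end Energy
section Chain

/-- The chain configuration `{w, w+t₁, …, w+(n-1)t₁}`. -/
def chainPt (w : Pt) (n : ℕ) : Finset Pt :=
  (Finset.range n).image fun i : ℕ => w + ((i : ℕ) : ℝ) • t1

lemma image_coe_range (n : ℕ) (g : ℝ → Pt) :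
    Finset.image g ((Finset.range n : Finset ℕ) : Finset ℝ)
      = (Finset.range n).image (fun i : ℕ => g i) := by
  ext x
  simp

lemma isConsecutive_iff {p q n : ℕ} {Dw : Finset Pt} :
    IsConsecutive p q n Dw ↔ ∃ w ∈ bLFS p q, Dw = chainPt w n := by
  unfold IsConsecutive chainPt
  refine exists_congr fun w => and_congr_right fun _ => ?_
  rw [image_coe_range n (fun i => w + i • t1)]

lemma smul_t1 (a : ℝ) : a • t1 = ((a, 0) : Pt) := by
  simp [t1, Prod.smul_def]

lemma chain_pt_eq (w : Pt) (a : ℝ) : w + a • t1 = ((w.1 + a, w.2) : Pt) := by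
  rw [smul_t1, Prod.ext_iff]
  constructor <;> simp

lemma dE_chain (w : Pt) (a b : ℝ) : dE (w + a • t1) (w + b • t1) = |a - b| := by
  rw [chain_pt_eq, chain_pt_eq]
  unfold dE
  simp only
  rw [show (w.1 + a - (w.1 + b)) = a - b by ring, show (w.2 - w.2) = 0 by ring]
  rw [show (a-b)^2 + 0^2 = (a-b)^2 by ring]
  exact Real.sqrt_sq_eq_abs _

lemma chain_inj (w : Pt) : Function.Injective (fun i : ℕ => w + (i : ℝ) • t1) := by
  intro a b h
  simp only [chain_pt_eq, Prod.ext_iff] at h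
  have : (a : ℝ) = b := by linarith [h.1]
  exact_mod_cast this

lemma chainPt_card (w : Pt) (n : ℕ) : (chainPt w n).card = n := by
  rw [chainPt, Finset.card_image_of_injective _ (chain_inj w), Finset.card_range]

lemma chainPt_succ (w : Pt) (n : ℕ) :
    chainPt w (n + 1) = insert (w + (n : ℝ) • t1) (chainPt w n) := by
  rw [chainPt, Finset.range_add_one, Finset.image_insert]; rfl

lemma not_mem_chainPt (w : Pt) (n : ℕ) : w + (n : ℝ) • t1 ∉ chainPt w n := by
  rw [chainPt, Finset.mem_image]
  rintro ⟨i, hi, h⟩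
  have := chain_inj w h
  rw [Finset.mem_range] at hi
  omega

lemma bLFS_one_mem {p : ℕ} {w : Pt} (hw : w ∈ bLFS p 1) (m : ℤ) :
    w + (m : ℝ) • t1 ∈ bLFS p 1 := by
  obtain ⟨k, rfl⟩ := hw
  refine ⟨k + m, ?_⟩
  rw [chain_pt_eq]
  refine Prod.ext_iff.mpr ⟨?_, rfl⟩
  push_cast
  ring

lemma chainPt_subset_LF {p : ℕ} {w : Pt} (hw : w ∈ bLFS p 1) (n : ℕ) :
    ↑(chainPt w n) ⊆ LF p 1 := by
  intro x hx
  rw [chainPt, Finset.coe_image] at hx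
  obtain ⟨i, _, rfl⟩ := hx
  obtain ⟨k, rfl⟩ := hw
  rw [mem_LF_iff]
  refine ⟨(k + i, 0), ?_⟩
  show _ + _ • t1 = _
  rw [chain_pt_eq]
  refine Prod.ext_iff.mpr ⟨?_, ?_⟩ <;> simp [phi] <;> push_cast <;> ring

lemma realVn_chain {cF cS : ℝ} {p : ℕ} {w : Pt} (hw : w ∈ bLFS p 1) :
    ∀ n : ℕ, realVn cF cS p 1 (chainPt w n)
      = if n = 0 then 0 else -(2 * cF) * ((n : ℝ) - 1) - cS * n := by
  intro n
  induction n with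
  | zero => simp [chainPt, realVn]
  | succ n ih =>
    rw [chainPt_succ, realVn_insert (not_mem_chainPt w n)]
    have hv1 : v1 cS p 1 (w + (n : ℝ) • t1) = -cS := by
      rw [v1, if_pos]
      exact_mod_cast bLFS_one_mem hw (n : ℤ)
    have hcross : (∑ y ∈ chainPt w n, if dE (w + (n : ℝ) • t1) y = 1 then -cF else (0:ℝ))
        = if n = 0 then 0 else -cF := by
      rw [chainPt, Finset.sum_image (fun a _ b _ h => chain_inj w h)]
      have key : ∀ i ∈ Finset.range n,
          (if dE (w + (n : ℝ) • t1) (w + ((i:ℕ) : ℝ) • t1) = 1 then -cF else (0:ℝ))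
            = if i = n - 1 then -cF else 0 := by
        intro i hi
        rw [Finset.mem_range] at hi
        rw [dE_chain]
        have hle : (i:ℝ) ≤ n := by exact_mod_cast hi.le
        rw [abs_of_nonneg (by linarith)]
        have hcond : ((n:ℝ) - (i:ℝ) = 1) ↔ (i = n - 1) := by
          constructor
          · intro h
            have h2 : (i:ℝ) + 1 = n := by linarith
            have h3 : i + 1 = n := by exact_mod_cast h2
            omega
          · intro h
            subst h
            have h1 : 1 ≤ n := by omega
            push_cast [Nat.cast_sub h1]
            ring
        simp only [hcond]
      rw [Finset.sum_congr rfl key, Finset.sum_ite_eq' (Finset.range n) (n-1) (fun _ => -cF)]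
      by_cases hn : n = 0
      · simp [hn]
      · rw [if_pos (Finset.mem_range.mpr (by omega)), if_neg hn]
    rw [ih, hv1, hcross]
    by_cases hn : n = 0
    · subst hn
      rw [if_pos rfl, if_pos rfl, if_neg (Nat.succ_ne_zero 0)]
      push_cast
      ring
    · rw [if_neg hn, if_neg hn, if_neg (Nat.succ_ne_zero n)]
      push_cast
      ring

end Chain
section TwoRow

lemma int_eq_of_sq_eq_one {d : ℤ} (h : d ^ 2 = 1) : d = 1 ∨ d = -1 := by
  have h1 : (d - 1) * (d + 1) = 0 := by ring_nf; linarith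
  rcases mul_eq_zero.mp h1 with h2 | h2
  · left; omega
  · right; omega

lemma int_eq_of_sq_eq_self {a : ℤ} (h : a ^ 2 = a) : a = 0 ∨ a = 1 := by
  have h1 : a * (a - 1) = 0 := by ring_nf; linarith
  rcases mul_eq_zero.mp h1 with h2 | h2
  · left; exact h2
  · right; omega

def ptA (p i : ℕ) : Pt := phi (eS p 1) ((i : ℤ), 0)
def ptB (p i : ℕ) : Pt := phi (eS p 1) ((i : ℤ), 1)

def twoRow (p m : ℕ) : Finset Pt :=
  ((Finset.range m).image (ptA p)) ∪ ((Finset.range m).image (ptB p))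

lemma ptA_inj (p : ℕ) : Function.Injective (ptA p) := by
  intro a b h
  have := phi_inj _ h
  simpa using this

lemma ptB_inj (p : ℕ) : Function.Injective (ptB p) := by
  intro a b h
  have := phi_inj _ h
  simpa using this

lemma ptA_ne_ptB (p i j : ℕ) : ptA p i ≠ ptB p j := by
  intro h
  have := phi_inj _ h
  simp [Prod.ext_iff] at this

lemma twoRow_disj (p m : ℕ) :
    Disjoint ((Finset.range m).image (ptA p)) ((Finset.range m).image (ptB p)) := by
  rw [Finset.disjoint_left]
  intro x hx hy
  obtain ⟨i, _, rfl⟩ := Finset.mem_image.mp hx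
  obtain ⟨j, _, hj⟩ := Finset.mem_image.mp hy
  exact ptA_ne_ptB p i j hj.symm

lemma twoRow_card (p m : ℕ) : (twoRow p m).card = 2 * m := by
  rw [twoRow, Finset.card_union_of_disjoint (twoRow_disj p m),
    Finset.card_image_of_injective _ (ptA_inj p),
    Finset.card_image_of_injective _ (ptB_inj p), Finset.card_range]
  ring

lemma twoRow_subset_LF (p m : ℕ) : ↑(twoRow p m) ⊆ LF p 1 := by
  intro x hx
  rw [twoRow, Finset.coe_union, Finset.coe_image, Finset.coe_image] at hx
  rw [mem_LF_iff]
  rcases hx with ⟨i, _, rfl⟩ | ⟨i, _, rfl⟩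
  · exact ⟨_, rfl⟩
  · exact ⟨_, rfl⟩

lemma dE_AA (p i j : ℕ) : dE (ptA p i) (ptA p j) = 1 ↔ ((i:ℤ) - j)^2 = 1 := by
  rw [ptA, ptA, dE_phi_eq_one_iff]
  unfold nbr Q
  constructor <;> intro h <;> [nlinarith; nlinarith]

lemma dE_BB (p i j : ℕ) : dE (ptB p i) (ptB p j) = 1 ↔ ((i:ℤ) - j)^2 = 1 := by
  rw [ptB, ptB, dE_phi_eq_one_iff]
  unfold nbr Q
  constructor <;> intro h <;> [nlinarith; nlinarith]

lemma dE_AB (p i j : ℕ) : dE (ptA p i) (ptB p j) = 1 ↔ ((i:ℤ) = j ∨ (i:ℤ) = j + 1) := by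
  rw [ptA, ptB, dE_phi_eq_one_iff]
  unfold nbr Q
  constructor
  · intro h
    have h2 : ((i:ℤ) - j) ^ 2 = (i:ℤ) - j := by push_cast at h ⊢; nlinarith
    rcases int_eq_of_sq_eq_self h2 with h3 | h3
    · left; omega
    · right; omega
  · intro h
    rcases h with h | h <;> · rw [show ((0:ℕ):ℤ) - ((1:ℕ):ℤ) = -1 by norm_num]; nlinarith

lemma dE_BA (p i j : ℕ) : dE (ptB p i) (ptA p j) = 1 ↔ ((j:ℤ) = i ∨ (j:ℤ) = i + 1) := by
  rw [dE_symm, dE_AB]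

lemma v1_ptA (cS : ℝ) (p i : ℕ) : v1 cS p 1 (ptA p i) = -cS := by
  rw [v1, if_pos]
  exact phi_mem_bLFS_iff.mpr rfl

lemma v1_ptB (cS : ℝ) (p i : ℕ) : v1 cS p 1 (ptB p i) = 0 := by
  rw [v1, if_neg]
  intro h
  exact one_ne_zero (phi_mem_bLFS_iff.mp h)

lemma ptA_not_mem_twoRow (p m : ℕ) : ptA p m ∉ twoRow p m := by
  rw [twoRow, Finset.mem_union]
  rintro (h | h) <;> obtain ⟨i, hi, hij⟩ := Finset.mem_image.mp h
  · have := ptA_inj p hij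
    rw [Finset.mem_range] at hi
    omega
  · exact ptA_ne_ptB p m i hij.symm

lemma ptB_not_mem (p m : ℕ) : ptB p m ∉ insert (ptA p m) (twoRow p m) := by
  rw [Finset.mem_insert, twoRow, Finset.mem_union]
  rintro (h | h | h)
  · exact ptA_ne_ptB p m m h.symm
  · obtain ⟨i, hi, hij⟩ := Finset.mem_image.mp h
    exact ptA_ne_ptB p i m hij
  · obtain ⟨i, hi, hij⟩ := Finset.mem_image.mp h
    have := ptB_inj p hij
    rw [Finset.mem_range] at hi
    omega

lemma twoRow_succ (p m : ℕ) :
    twoRow p (m+1) = insert (ptB p m) (insert (ptA p m) (twoRow p m)) := by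
  rw [twoRow, twoRow, Finset.range_add_one, Finset.image_insert, Finset.image_insert,
    Finset.insert_union, Finset.union_insert, Finset.insert_comm]

lemma realVn_twoRow (cF cS : ℝ) (p : ℕ) :
    ∀ m : ℕ, realVn cF cS p 1 (twoRow p m)
      = if m = 0 then 0 else -(2*cF) * (4*(m:ℝ) - 3) - cS * m := by
  intro m
  induction m with
  | zero => simp [twoRow, realVn]
  | succ m ih =>
    rw [twoRow_succ, realVn_insert (ptB_not_mem p m),
      realVn_insert (ptA_not_mem_twoRow p m)]
    have hsumA : ∀ (x : Pt), (∑ y ∈ twoRow p m, if dE x y = 1 then -cF else (0:ℝ))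
        = (∑ i ∈ Finset.range m, if dE x (ptA p i) = 1 then -cF else (0:ℝ))
          + (∑ i ∈ Finset.range m, if dE x (ptB p i) = 1 then -cF else (0:ℝ)) := by
      intro x
      rw [twoRow, Finset.sum_union (twoRow_disj p m),
        Finset.sum_image (fun a _ b _ h => ptA_inj p h),
        Finset.sum_image (fun a _ b _ h => ptB_inj p h)]
    have e1 : (∑ i ∈ Finset.range m, if dE (ptA p m) (ptA p i) = 1 then -cF else (0:ℝ))
        = if m = 0 then 0 else -cF := by
      have key : ∀ i ∈ Finset.range m,
          (if dE (ptA p m) (ptA p i) = 1 then -cF else (0:ℝ)) = if i = m - 1 then -cF else 0 := by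
        intro i hi
        rw [Finset.mem_range] at hi
        have : dE (ptA p m) (ptA p i) = 1 ↔ i = m - 1 := by
          rw [dE_AA]
          constructor
          · intro h
            rcases int_eq_of_sq_eq_one h with h2 | h2 <;> omega
          · intro h; subst h
            have : ((m:ℤ) - (m - 1 : ℕ)) = 1 := by omega
            rw [this]; norm_num
        simp only [this]
      rw [Finset.sum_congr rfl key, Finset.sum_ite_eq' (Finset.range m) (m-1) (fun _ => -cF)]
      by_cases hm : m = 0
      · simp [hm]
      · rw [if_pos (Finset.mem_range.mpr (by omega)), if_neg hm]
    have e2 : (∑ i ∈ Finset.range m, if dE (ptA p m) (ptB p i) = 1 then -cF else (0:ℝ))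
        = if m = 0 then 0 else -cF := by
      have key : ∀ i ∈ Finset.range m,
          (if dE (ptA p m) (ptB p i) = 1 then -cF else (0:ℝ)) = if i = m - 1 then -cF else 0 := by
        intro i hi
        rw [Finset.mem_range] at hi
        have : dE (ptA p m) (ptB p i) = 1 ↔ i = m - 1 := by
          rw [dE_AB]
          constructor
          · rintro (h | h) <;> omega
          · intro h; right; omega
        simp only [this]
      rw [Finset.sum_congr rfl key, Finset.sum_ite_eq' (Finset.range m) (m-1) (fun _ => -cF)]
      by_cases hm : m = 0
      · simp [hm]
      · rw [if_pos (Finset.mem_range.mpr (by omega)), if_neg hm]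
    have e3 : (∑ i ∈ Finset.range m, if dE (ptB p m) (ptA p i) = 1 then -cF else (0:ℝ))
        = 0 := by
      apply Finset.sum_eq_zero
      intro i hi
      rw [Finset.mem_range] at hi
      rw [if_neg]
      rw [dE_BA]
      rintro (h | h) <;> omega
    have e4 : (∑ i ∈ Finset.range m, if dE (ptB p m) (ptB p i) = 1 then -cF else (0:ℝ))
        = if m = 0 then 0 else -cF := by
      have key : ∀ i ∈ Finset.range m,
          (if dE (ptB p m) (ptB p i) = 1 then -cF else (0:ℝ)) = if i = m - 1 then -cF else 0 := by
        intro i hi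
        rw [Finset.mem_range] at hi
        have : dE (ptB p m) (ptB p i) = 1 ↔ i = m - 1 := by
          rw [dE_BB]
          constructor
          · intro h
            rcases int_eq_of_sq_eq_one h with h2 | h2 <;> omega
          · intro h; subst h
            have : ((m:ℤ) - (m - 1 : ℕ)) = 1 := by omega
            rw [this]; norm_num
        simp only [this]
      rw [Finset.sum_congr rfl key, Finset.sum_ite_eq' (Finset.range m) (m-1) (fun _ => -cF)]
      by_cases hm : m = 0
      · simp [hm]
      · rw [if_pos (Finset.mem_range.mpr (by omega)), if_neg hm]
    have eB : (∑ y ∈ insert (ptA p m) (twoRow p m), if dE (ptB p m) y = 1 then -cF else (0:ℝ))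
        = -cF + (if m = 0 then 0 else -cF) := by
      rw [Finset.sum_insert (ptA_not_mem_twoRow p m), hsumA, e3, e4]
      rw [if_pos ((dE_BA p m m).mpr (Or.inl rfl))]
      ring
    rw [eB, hsumA, e1, e2, ih, v1_ptA, v1_ptB]
    by_cases hm : m = 0
    · subst hm
      rw [if_pos rfl, if_pos rfl, if_neg (Nat.succ_ne_zero 0)]
      push_cast
      ring
    · rw [if_neg hm, if_neg hm, if_neg (Nat.succ_ne_zero m)]
      push_cast
      ring

end TwoRow
section Counting

lemma nbr_iff {k l : ℤ × ℕ} : nbr k l ↔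
    (k.2 = l.2 ∧ (k.1 = l.1 + 1 ∨ l.1 = k.1 + 1)) ∨
    (k.2 + 1 = l.2 ∧ (k.1 = l.1 ∨ k.1 = l.1 + 1)) ∨
    (l.2 + 1 = k.2 ∧ (k.1 = l.1 ∨ l.1 = k.1 + 1)) := by
  unfold nbr Q
  constructor
  · intro h
    set a := k.1 - l.1 with ha
    set b := (k.2 : ℤ) - (l.2 : ℤ) with hb
    have h4 : (2*a + b)^2 + 3*b^2 = 4 := by linear_combination 4*h
    have hble : b ≤ 1 := by nlinarith [sq_nonneg (2*a+b), sq_nonneg (b-1)]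
    have hbge : -1 ≤ b := by nlinarith [sq_nonneg (2*a+b), sq_nonneg (b+1)]
    have hbr : b = -1 ∨ b = 0 ∨ b = 1 := by omega
    rcases hbr with h1 | h1 | h1
    · have ha2 : a ^ 2 = a := by nlinarith
      rcases int_eq_of_sq_eq_self ha2 with h2 | h2
      · exact Or.inr (Or.inl ⟨by omega, Or.inl (by omega)⟩)
      · exact Or.inr (Or.inl ⟨by omega, Or.inr (by omega)⟩)
    · have ha2 : a ^ 2 = 1 := by nlinarith
      rcases int_eq_of_sq_eq_one ha2 with h2 | h2
      · exact Or.inl ⟨by omega, Or.inl (by omega)⟩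
      · exact Or.inl ⟨by omega, Or.inr (by omega)⟩
    · have ha2 : (-a) ^ 2 = -a := by nlinarith
      rcases int_eq_of_sq_eq_self ha2 with h2 | h2
      · exact Or.inr (Or.inr ⟨by omega, Or.inl (by omega)⟩)
      · exact Or.inr (Or.inr ⟨by omega, Or.inr (by omega)⟩)
  · rintro (⟨h1, h2 | h2⟩ | ⟨h1, h2 | h2⟩ | ⟨h1, h2 | h2⟩)
    · have e1 : k.1 - l.1 = 1 := by omega
      have e2 : (k.2:ℤ) - (l.2:ℤ) = 0 := by omega
      rw [e1, e2]; norm_num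
    · have e1 : k.1 - l.1 = -1 := by omega
      have e2 : (k.2:ℤ) - (l.2:ℤ) = 0 := by omega
      rw [e1, e2]; norm_num
    · have e1 : k.1 - l.1 = 0 := by omega
      have e2 : (k.2:ℤ) - (l.2:ℤ) = -1 := by omega
      rw [e1, e2]; norm_num
    · have e1 : k.1 - l.1 = 1 := by omega
      have e2 : (k.2:ℤ) - (l.2:ℤ) = -1 := by omega
      rw [e1, e2]; norm_num
    · have e1 : k.1 - l.1 = 0 := by omega
      have e2 : (k.2:ℤ) - (l.2:ℤ) = 1 := by omega
      rw [e1, e2]; norm_num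
    · have e1 : k.1 - l.1 = -1 := by omega
      have e2 : (k.2:ℤ) - (l.2:ℤ) = 1 := by omega
      rw [e1, e2]; norm_num

/-- Number of ordered neighbour pairs. -/
def NN (T : Finset (ℤ × ℕ)) : ℕ := (T.offDiag.filter fun e => nbr e.1 e.2).card

/-- Number of atoms on the substrate line. -/
def lineS (T : Finset (ℤ × ℕ)) : ℕ := (T.filter fun k => k.2 = 0).card

/-- Atoms having a right horizontal neighbour. -/
def HBs (T : Finset (ℤ × ℕ)) : Finset (ℤ × ℕ) := T.filter fun k => (k.1 + 1, k.2) ∈ T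

/-- Occupied levels. -/
def levs (T : Finset (ℤ × ℕ)) : Finset ℕ := T.image Prod.snd

def kmin (T : Finset (ℤ × ℕ)) : ℕ := WithTop.untopD 0 (levs T).min

def Lmin (T : Finset (ℤ × ℕ)) : ℕ := (T.filter fun k => k.2 = kmin T).card

lemma kmin_le {T : Finset (ℤ × ℕ)} {x : ℤ × ℕ} (hx : x ∈ T) : kmin T ≤ x.2 := by
  have h1 : x.2 ∈ levs T := Finset.mem_image_of_mem _ hx
  have h2 := Finset.min_le h1
  unfold kmin
  cases hmin : (levs T).min with
  | top =>
    exfalso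
    have : levs T = ∅ := Finset.min_eq_top.mp hmin
    rw [this] at h1
    exact Finset.notMem_empty _ h1
  | coe m =>
    rw [hmin] at h2
    simp only [WithTop.untopD_coe]
    exact_mod_cast h2

lemma lineS_le_Lmin {T : Finset (ℤ × ℕ)} : lineS T ≤ Lmin T := by
  by_cases h : lineS T = 0
  · omega
  · have hne : (T.filter fun k => k.2 = 0).Nonempty := by
      rw [← Finset.card_pos]; unfold lineS at h; omega
    obtain ⟨x, hx⟩ := hne
    rw [Finset.mem_filter] at hx
    have h0 : kmin T = 0 := by
      have := kmin_le hx.1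
      omega
    unfold lineS Lmin
    rw [h0]

lemma kmin_mem {T : Finset (ℤ × ℕ)} (h : T.Nonempty) : kmin T ∈ levs T := by
  obtain ⟨x, hx⟩ := h
  have hne : (levs T).Nonempty := ⟨x.2, Finset.mem_image_of_mem _ hx⟩
  unfold kmin
  rw [← Finset.coe_min' hne]
  simp only [WithTop.untopD_coe]
  exact Finset.min'_mem _ hne

lemma Lmin_pos {T : Finset (ℤ × ℕ)} (h : T.Nonempty) : 1 ≤ Lmin T := by
  obtain ⟨y, hy, hy2⟩ := Finset.mem_image.mp (kmin_mem h)
  unfold Lmin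
  rw [Nat.one_le_iff_ne_zero, ← Nat.pos_iff_ne_zero, Finset.card_pos]
  exact ⟨y, Finset.mem_filter.mpr ⟨hy, hy2⟩⟩

lemma Lmin_le_card {T : Finset (ℤ × ℕ)} : Lmin T ≤ T.card :=
  Finset.card_le_card (Finset.filter_subset _ _)

lemma lineS_le_card {T : Finset (ℤ × ℕ)} : lineS T ≤ T.card :=
  Finset.card_le_card (Finset.filter_subset _ _)

end Counting
section Bounds

lemma nbr_symm {k l : ℤ × ℕ} (h : nbr k l) : nbr l k := by
  unfold nbr Q at h ⊢
  linear_combination h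

def FUs (T : Finset (ℤ × ℕ)) : Finset ((ℤ × ℕ) × (ℤ × ℕ)) :=
  T.offDiag.filter fun e => nbr e.1 e.2 ∧ e.1.2 + 1 = e.2.2

def FDs (T : Finset (ℤ × ℕ)) : Finset ((ℤ × ℕ) × (ℤ × ℕ)) :=
  T.offDiag.filter fun e => nbr e.1 e.2 ∧ e.2.2 + 1 = e.1.2

def FPs (T : Finset (ℤ × ℕ)) : Finset ((ℤ × ℕ) × (ℤ × ℕ)) :=
  T.offDiag.filter fun e => nbr e.1 e.2 ∧ e.1.2 = e.2.2 ∧ e.2.1 = e.1.1 + 1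

def FMs (T : Finset (ℤ × ℕ)) : Finset ((ℤ × ℕ) × (ℤ × ℕ)) :=
  T.offDiag.filter fun e => nbr e.1 e.2 ∧ e.1.2 = e.2.2 ∧ e.1.1 = e.2.1 + 1

lemma NN_split (T : Finset (ℤ × ℕ)) :
    NN T = (FPs T).card + (FMs T).card + (FUs T).card + (FDs T).card := by
  have hun : T.offDiag.filter (fun e => nbr e.1 e.2)
      = ((FPs T ∪ FMs T) ∪ FUs T) ∪ FDs T := by
    unfold FPs FMs FUs FDs
    ext e
    simp only [Finset.mem_union, Finset.mem_filter]
    constructor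
    · rintro ⟨he, hn⟩
      rcases nbr_iff.mp hn with ⟨hb, ha | ha⟩ | ⟨hb, ha⟩ | ⟨hb, ha⟩
      · exact Or.inl (Or.inl (Or.inr ⟨he, hn, hb, ha⟩))
      · exact Or.inl (Or.inl (Or.inl ⟨he, hn, hb, ha⟩))
      · exact Or.inl (Or.inr ⟨he, hn, hb⟩)
      · exact Or.inr ⟨he, hn, hb⟩
    · rintro (((⟨he, hn, _⟩ | ⟨he, hn, _⟩) | ⟨he, hn, _⟩) | ⟨he, hn, _⟩) <;> exact ⟨he, hn⟩
  have d1 : Disjoint (FPs T) (FMs T) := by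
    rw [Finset.disjoint_left]
    intro e he he'
    rw [FPs, Finset.mem_filter] at he
    rw [FMs, Finset.mem_filter] at he'
    obtain ⟨_, _, _, h1⟩ := he
    obtain ⟨_, _, _, h2⟩ := he'
    omega
  have d2 : Disjoint (FPs T ∪ FMs T) (FUs T) := by
    rw [Finset.disjoint_left]
    intro e he he'
    rw [FUs, Finset.mem_filter] at he'
    obtain ⟨_, _, h2⟩ := he'
    rw [Finset.mem_union] at he
    rcases he with he | he
    · rw [FPs, Finset.mem_filter] at he
      obtain ⟨_, _, h1, _⟩ := he
      omega
    · rw [FMs, Finset.mem_filter] at he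
      obtain ⟨_, _, h1, _⟩ := he
      omega
  have d3 : Disjoint ((FPs T ∪ FMs T) ∪ FUs T) (FDs T) := by
    rw [Finset.disjoint_left]
    intro e he he'
    rw [FDs, Finset.mem_filter] at he'
    obtain ⟨_, _, h2⟩ := he'
    rw [Finset.mem_union] at he
    rcases he with he | he
    · rw [Finset.mem_union] at he
      rcases he with he | he
      · rw [FPs, Finset.mem_filter] at he
        obtain ⟨_, _, h1, _⟩ := he
        omega
      · rw [FMs, Finset.mem_filter] at he
        obtain ⟨_, _, h1, _⟩ := he
        omega
    · rw [FUs, Finset.mem_filter] at he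
      obtain ⟨_, _, h1⟩ := he
      omega
  unfold NN
  rw [hun, Finset.card_union_of_disjoint d3, Finset.card_union_of_disjoint d2,
    Finset.card_union_of_disjoint d1]

lemma FPs_card (T : Finset (ℤ × ℕ)) : (FPs T).card = (HBs T).card := by
  apply Finset.card_bij (fun e _ => e.1)
  · rintro e he
    rw [FPs, Finset.mem_filter, Finset.mem_offDiag] at he
    obtain ⟨⟨h1, h2, _⟩, _, hb, ha⟩ := he
    refine Finset.mem_filter.mpr ⟨h1, ?_⟩
    have : (e.1.1 + 1, e.1.2) = e.2 := Prod.ext (by omega) (by omega)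
    rw [this]
    exact h2
  · rintro e he e' he' h
    rw [FPs, Finset.mem_filter] at he he'
    obtain ⟨_, _, hb, ha⟩ := he
    obtain ⟨_, _, hb', ha'⟩ := he'
    have c1 : e.1.1 = e'.1.1 := congrArg Prod.fst h
    have c2 : e.1.2 = e'.1.2 := congrArg Prod.snd h
    have h2 : e.2 = e'.2 := Prod.ext (by omega) (by omega)
    exact Prod.ext h h2
  · rintro x hx
    rw [HBs, Finset.mem_filter] at hx
    refine ⟨(x, (x.1 + 1, x.2)), ?_, rfl⟩
    rw [FPs, Finset.mem_filter, Finset.mem_offDiag]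
    refine ⟨⟨hx.1, hx.2, ?_⟩, ?_, rfl, rfl⟩
    · intro h
      have : x.1 = x.1 + 1 := congrArg Prod.fst h
      omega
    · rw [nbr_iff]
      exact Or.inl ⟨rfl, Or.inr rfl⟩

lemma FMs_card (T : Finset (ℤ × ℕ)) : (FMs T).card = (HBs T).card := by
  apply Finset.card_bij (fun e _ => e.2)
  · rintro e he
    rw [FMs, Finset.mem_filter, Finset.mem_offDiag] at he
    obtain ⟨⟨h1, h2, _⟩, _, hb, ha⟩ := he
    refine Finset.mem_filter.mpr ⟨h2, ?_⟩
    have : (e.2.1 + 1, e.2.2) = e.1 := Prod.ext (by omega) (by omega)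
    rw [this]
    exact h1
  · rintro e he e' he' h
    rw [FMs, Finset.mem_filter] at he he'
    obtain ⟨_, _, hb, ha⟩ := he
    obtain ⟨_, _, hb', ha'⟩ := he'
    have c1 : e.2.1 = e'.2.1 := congrArg Prod.fst h
    have c2 : e.2.2 = e'.2.2 := congrArg Prod.snd h
    have h2 : e.1 = e'.1 := Prod.ext (by omega) (by omega)
    exact Prod.ext h2 h
  · rintro x hx
    rw [HBs, Finset.mem_filter] at hx
    refine ⟨((x.1 + 1, x.2), x), ?_, rfl⟩
    rw [FMs, Finset.mem_filter, Finset.mem_offDiag]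
    refine ⟨⟨hx.2, hx.1, ?_⟩, ?_, rfl, rfl⟩
    · intro h
      have : x.1 + 1 = x.1 := congrArg Prod.fst h
      omega
    · rw [nbr_iff]
      exact Or.inl ⟨rfl, Or.inl rfl⟩

lemma FDs_card (T : Finset (ℤ × ℕ)) : (FDs T).card = (FUs T).card := by
  apply Finset.card_bij (fun e _ => e.swap)
  · rintro e he
    rw [FDs, Finset.mem_filter, Finset.mem_offDiag] at he
    obtain ⟨⟨h1, h2, h3⟩, hn, hl⟩ := he
    rw [FUs, Finset.mem_filter, Finset.mem_offDiag]
    exact ⟨⟨h2, h1, fun h => h3 h.symm⟩, nbr_symm hn, hl⟩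
  · rintro e _ e' _ h
    exact Prod.swap_injective h
  · rintro e he
    rw [FUs, Finset.mem_filter, Finset.mem_offDiag] at he
    obtain ⟨⟨h1, h2, h3⟩, hn, hl⟩ := he
    refine ⟨e.swap, ?_, Prod.swap_swap e⟩
    rw [FDs, Finset.mem_filter, Finset.mem_offDiag]
    exact ⟨⟨h2, h1, fun h => h3 h.symm⟩, nbr_symm hn, hl⟩

lemma NN_eq (T : Finset (ℤ × ℕ)) : NN T = 2 * (HBs T).card + 2 * (FUs T).card := by
  rw [NN_split, FPs_card, FMs_card, FDs_card]
  ring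

lemma FUs_bound (T : Finset (ℤ × ℕ)) :
    (FUs T).card + 2 * Lmin T ≤ 2 * T.card := by
  have h1 : (FUs T).card ≤ 2 * ((FUs T).image (fun e => e.2)).card := by
    apply Finset.card_le_mul_card_image
    intro y hy
    have hsub : (FUs T).filter (fun e => e.2 = y)
        ⊆ ({((y.1, y.2 - 1), y), ((y.1 + 1, y.2 - 1), y)} :
            Finset ((ℤ × ℕ) × (ℤ × ℕ))) := by
      intro e he
      rw [Finset.mem_filter] at he
      obtain ⟨he1, he2⟩ := he
      rw [FUs, Finset.mem_filter] at he1
      obtain ⟨_, hn, hl⟩ := he1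
      subst he2
      rcases nbr_iff.mp hn with ⟨hb, _⟩ | ⟨hb, ha | ha⟩ | ⟨hb, _⟩
      · omega
      · rw [Finset.mem_insert, Finset.mem_singleton]
        left
        have h1 : e.1 = (e.2.1, e.2.2 - 1) := Prod.ext (by omega) (by omega)
        exact Prod.ext h1 rfl
      · rw [Finset.mem_insert, Finset.mem_singleton]
        right
        have h1 : e.1 = (e.2.1 + 1, e.2.2 - 1) := Prod.ext (by omega) (by omega)
        exact Prod.ext h1 rfl
      · omega
    calc ((FUs T).filter (fun e => e.2 = y)).card
        ≤ _ := Finset.card_le_card hsub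
      _ ≤ 2 := by
          apply le_trans (Finset.card_insert_le _ _)
          simp
  have h2 : ((FUs T).image (fun e => e.2)) ⊆ T.filter (fun k => ¬ k.2 = kmin T) := by
    intro y hy
    obtain ⟨e, he, rfl⟩ := Finset.mem_image.mp hy
    rw [FUs, Finset.mem_filter, Finset.mem_offDiag] at he
    obtain ⟨⟨hx1, hx2, _⟩, _, hl⟩ := he
    refine Finset.mem_filter.mpr ⟨hx2, ?_⟩
    have := kmin_le hx1
    omega
  have h3 : (T.filter (fun k => k.2 = kmin T)).card
      + (T.filter (fun k => ¬ k.2 = kmin T)).card = T.card :=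
    Finset.card_filter_add_card_filter_not _
  have h4 := Finset.card_le_card h2
  unfold Lmin
  omega

def mA (T : Finset (ℤ × ℕ)) (r : ℕ) : ℤ :=
  WithBot.unbotD 0 (((T.filter fun k => k.2 = r).image Prod.fst).max)

lemma mA_mem {T : Finset (ℤ × ℕ)} {r : ℕ} (hr : r ∈ levs T) :
    (mA T r, r) ∈ T ∧ ∀ a ∈ ((T.filter fun k => k.2 = r).image Prod.fst), a ≤ mA T r := by
  obtain ⟨x, hx, hx2⟩ := Finset.mem_image.mp hr
  have hne : ((T.filter fun k => k.2 = r).image Prod.fst).Nonempty :=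
    ⟨x.1, Finset.mem_image_of_mem _ (Finset.mem_filter.mpr ⟨hx, hx2⟩)⟩
  have hmax : mA T r = ((T.filter fun k => k.2 = r).image Prod.fst).max' hne := by
    unfold mA
    rw [← Finset.coe_max' hne]
    rfl
  constructor
  · have h1 := Finset.max'_mem _ hne
    rw [← hmax] at h1
    obtain ⟨z, hz, hz2⟩ := Finset.mem_image.mp h1
    rw [Finset.mem_filter] at hz
    have : z = (mA T r, r) := Prod.ext hz2 hz.2
    exact this ▸ hz.1
  · intro a ha
    rw [hmax]
    exact Finset.le_max' _ a ha

lemma HB_bound (T : Finset (ℤ × ℕ)) : (HBs T).card + (levs T).card ≤ T.card := by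
  set M := (levs T).image (fun r => ((mA T r, r) : ℤ × ℕ)) with hM
  have hMcard : M.card = (levs T).card := by
    rw [hM]
    apply Finset.card_image_of_injOn
    intro a _ b _ h
    exact congrArg Prod.snd h
  have hMT : M ⊆ T := by
    intro x hx
    obtain ⟨r, hr, rfl⟩ := Finset.mem_image.mp hx
    exact (mA_mem hr).1
  have hHB : HBs T ⊆ T \ M := by
    intro x hx
    rw [HBs, Finset.mem_filter] at hx
    rw [Finset.mem_sdiff]
    refine ⟨hx.1, ?_⟩
    intro hxM
    obtain ⟨r, hr, hre⟩ := Finset.mem_image.mp hxM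
    have hx2 : x.2 = r := (congrArg Prod.snd hre).symm
    have hx1 : x.1 = mA T r := (congrArg Prod.fst hre).symm
    have hmem : x.1 + 1 ∈ ((T.filter fun k => k.2 = r).image Prod.fst) :=
      Finset.mem_image.mpr ⟨(x.1 + 1, x.2), Finset.mem_filter.mpr ⟨hx.2, hx2⟩, rfl⟩
    have := (mA_mem hr).2 _ hmem
    omega
  have h1 := Finset.card_le_card hHB
  rw [Finset.card_sdiff_of_subset hMT] at h1
  have h2 := Finset.card_le_card hMT
  omega

lemma NN_bound {T : Finset (ℤ × ℕ)} :
    NN T + 2 * (levs T).card + 4 * Lmin T ≤ 6 * T.card := by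
  have h1 := NN_eq T
  have h2 := FUs_bound T
  have h3 := HB_bound T
  omega

lemma levs_pos {T : Finset (ℤ × ℕ)} (h : T.Nonempty) : 1 ≤ (levs T).card := by
  obtain ⟨x, hx⟩ := h
  rw [Nat.one_le_iff_ne_zero, ← Nat.pos_iff_ne_zero, Finset.card_pos]
  exact ⟨x.2, Finset.mem_image_of_mem _ hx⟩

lemma levs_two {T : Finset (ℤ × ℕ)} {x y : ℤ × ℕ} (hx : x ∈ T) (hy : y ∈ T)
    (hx2 : x.2 = 0) (hy2 : y.2 ≠ 0) : 2 ≤ (levs T).card := by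
  apply Finset.one_lt_card.mpr
  exact ⟨x.2, Finset.mem_image_of_mem _ hx, y.2, Finset.mem_image_of_mem _ hy, by omega⟩

end Bounds
section Transfer

lemma offDiag_image {T : Finset (ℤ × ℕ)} {f : (ℤ × ℕ) → Pt} (hf : Function.Injective f) :
    (T.image f).offDiag = T.offDiag.image (Prod.map f f) := by
  ext e
  constructor
  · intro he
    rw [Finset.mem_offDiag] at he
    obtain ⟨h1, h2, h3⟩ := he
    obtain ⟨a, ha, haa⟩ := Finset.mem_image.mp h1
    obtain ⟨b, hb, hbb⟩ := Finset.mem_image.mp h2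
    refine Finset.mem_image.mpr ⟨(a, b), Finset.mem_offDiag.mpr ⟨ha, hb, ?_⟩, Prod.ext haa hbb⟩
    intro hab
    apply h3
    rw [← haa, ← hbb, show a = b from hab]
  · intro he
    obtain ⟨u, hu, rfl⟩ := Finset.mem_image.mp he
    rw [Finset.mem_offDiag] at hu
    rw [Finset.mem_offDiag]
    refine ⟨Finset.mem_image_of_mem _ hu.1, Finset.mem_image_of_mem _ hu.2.1, ?_⟩
    intro h
    simp only [Prod.map_fst, Prod.map_snd] at h
    exact hu.2.2 (hf h)

lemma realVn_image (cF cS : ℝ) (p : ℕ) (T : Finset (ℤ × ℕ)) :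
    realVn cF cS p 1 (T.image (phi (eS p 1)))
      = -cF * NN T - cS * lineS T := by
  unfold realVn
  have hinj : Function.Injective (phi (eS p 1)) := phi_inj _
  have h1 : (∑ e ∈ (T.image (phi (eS p 1))).offDiag, if dE e.1 e.2 = 1 then -cF else (0:ℝ))
      = -cF * NN T := by
    rw [offDiag_image hinj]
    rw [Finset.sum_image (fun a _ b _ h =>
      Prod.ext (hinj (congrArg Prod.fst h)) (hinj (congrArg Prod.snd h)))]
    have : ∀ u ∈ T.offDiag,
        (if dE (Prod.map (phi (eS p 1)) (phi (eS p 1)) u).1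
            (Prod.map (phi (eS p 1)) (phi (eS p 1)) u).2 = 1 then -cF else (0:ℝ))
        = if nbr u.1 u.2 then -cF else 0 := by
      intro u _
      simp only [Prod.map, dE_phi_eq_one_iff]
    rw [Finset.sum_congr rfl this, ← Finset.sum_filter, Finset.sum_const, NN]
    simp [mul_comm]
  have h2 : (∑ x ∈ T.image (phi (eS p 1)), v1 cS p 1 x) = -cS * lineS T := by
    rw [Finset.sum_image (fun a _ b _ h => hinj h)]
    have : ∀ k ∈ T, v1 cS p 1 (phi (eS p 1) k) = if k.2 = 0 then -cS else 0 := by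
      intro k _
      rw [v1]
      by_cases h : k.2 = 0
      · rw [if_pos (phi_mem_bLFS_iff.mpr h), if_pos h]
      · rw [if_neg (fun hh => h (phi_mem_bLFS_iff.mp hh)), if_neg h]
    rw [Finset.sum_congr rfl this, ← Finset.sum_filter, Finset.sum_const, lineS]
    simp [mul_comm]
  rw [h1, h2]
  ring

lemma exists_T {p : ℕ} {D : Finset Pt} (hD : ↑D ⊆ LF p 1) :
    ∃ T : Finset (ℤ × ℕ), T.image (phi (eS p 1)) = D ∧ T.card = D.card := by
  classical
  have hinj : Function.Injective (phi (eS p 1)) := phi_inj _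
  refine ⟨D.preimage (phi (eS p 1)) (hinj.injOn), ?_, ?_⟩
  · rw [Finset.image_preimage]
    apply Finset.filter_true_of_mem
    intro x hx
    obtain ⟨k, hk⟩ := mem_LF_iff.mp (hD hx)
    exact ⟨k, hk.symm⟩
  · rw [← Finset.card_image_of_injective _ hinj, Finset.image_preimage]
    congr 1
    apply Finset.filter_true_of_mem
    intro x hx
    obtain ⟨k, hk⟩ := mem_LF_iff.mp (hD hx)
    exact ⟨k, hk.symm⟩

lemma interval_of_dense {S : Finset ℤ} (hne : S.Nonempty)
    (h : S.card ≤ (S.filter fun a => a + 1 ∈ S).card + 1) :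
    ∃ a : ℤ, S = (Finset.range S.card).image (fun i : ℕ => a + (i : ℤ)) := by
  set a := S.min' hne with ha
  set b := S.max' hne with hb
  have hsub : (S.filter fun x => x + 1 ∈ S) ⊆ S.erase b := by
    intro x hx
    rw [Finset.mem_filter] at hx
    rw [Finset.mem_erase]
    refine ⟨?_, hx.1⟩
    intro hxb
    have := Finset.le_max' S (x + 1) hx.2
    rw [← hb] at this
    omega
  have hcards : (S.erase b).card = S.card - 1 := by
    rw [Finset.card_erase_of_mem (Finset.max'_mem S hne)]
  have heq : (S.filter fun x => x + 1 ∈ S) = S.erase b := by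
    apply Finset.eq_of_subset_of_card_le hsub
    have h0 : 1 ≤ S.card := Finset.card_pos.mpr hne
    omega
  have hstep : ∀ x ∈ S, x ≠ b → x + 1 ∈ S := by
    intro x hx hxb
    have : x ∈ S.erase b := Finset.mem_erase.mpr ⟨hxb, hx⟩
    rw [← heq, Finset.mem_filter] at this
    exact this.2
  have hfill : ∀ d : ℕ, a + d ≤ b → a + d ∈ S := by
    intro d
    induction d with
    | zero => intro _; simpa using Finset.min'_mem S hne
    | succ d ih =>
      intro hd
      push_cast at hd ⊢
      have h1 : a + d ≤ b := by omega
      have h2 : a + (d:ℤ) ∈ S := by exact_mod_cast ih (by exact_mod_cast h1)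
      have h3 : a + (d:ℤ) ≠ b := by omega
      have := hstep _ h2 h3
      rw [show a + (d:ℤ) + 1 = a + ((d:ℤ) + 1) by ring] at this
      exact this
  have hIcc : S = Finset.Icc a b := by
    apply Finset.Subset.antisymm
    · intro x hx
      rw [Finset.mem_Icc]
      exact ⟨Finset.min'_le S x hx, Finset.le_max' S x hx⟩
    · intro x hx
      rw [Finset.mem_Icc] at hx
      have : a + ((x - a).toNat : ℤ) ≤ b := by omega
      have := hfill (x - a).toNat this
      rw [show a + ((x - a).toNat : ℤ) = x by omega] at this
      exact this
  have hcard : (b + 1 - a).toNat = S.card := by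
    rw [hIcc, Int.card_Icc]
  refine ⟨a, ?_⟩
  ext x
  rw [Finset.mem_image]
  constructor
  · intro hx
    rw [hIcc, Finset.mem_Icc] at hx
    exact ⟨(x - a).toNat, Finset.mem_range.mpr (by omega), by omega⟩
  · rintro ⟨i, hi, rfl⟩
    rw [Finset.mem_range] at hi
    rw [hIcc, Finset.mem_Icc]
    omega

lemma line_image_card {T : Finset (ℤ × ℕ)} (hline : ∀ x ∈ T, x.2 = 0) :
    (T.image Prod.fst).card = T.card := by
  apply Finset.card_image_of_injOn
  intro x hx y hy h
  exact Prod.ext h (by rw [hline x hx, hline y hy])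

lemma line_mem {T : Finset (ℤ × ℕ)} (hline : ∀ x ∈ T, x.2 = 0) {α : ℤ} :
    α ∈ T.image Prod.fst ↔ (α, 0) ∈ T := by
  constructor
  · intro h
    obtain ⟨x, hx, rfl⟩ := Finset.mem_image.mp h
    have : x = (x.1, 0) := Prod.ext rfl (hline x hx)
    exact this ▸ hx
  · intro h
    exact Finset.mem_image_of_mem _ h

lemma line_HB_card {T : Finset (ℤ × ℕ)} (hline : ∀ x ∈ T, x.2 = 0) :
    (HBs T).card = ((T.image Prod.fst).filter fun α => α + 1 ∈ T.image Prod.fst).card := by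
  apply Finset.card_bij (fun x _ => x.1)
  · intro x hx
    rw [HBs, Finset.mem_filter] at hx
    refine Finset.mem_filter.mpr ⟨Finset.mem_image_of_mem _ hx.1, ?_⟩
    rw [line_mem hline]
    have h0 : x.2 = 0 := hline x hx.1
    have : (x.1 + 1, x.2) = (x.1 + 1, 0) := Prod.ext rfl h0
    exact this ▸ hx.2
  · intro x hx y hy h
    rw [HBs, Finset.mem_filter] at hx hy
    exact Prod.ext h (by rw [hline x hx.1, hline y hy.1])
  · intro α hα
    rw [Finset.mem_filter, line_mem hline, line_mem hline] at hα
    refine ⟨(α, 0), ?_, rfl⟩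
    rw [HBs, Finset.mem_filter]
    exact ⟨hα.1, hα.2⟩

lemma consecutive_of_dense {p : ℕ} {T : Finset (ℤ × ℕ)} (hne : T.Nonempty)
    (hline : ∀ x ∈ T, x.2 = 0) (hHB : T.card ≤ (HBs T).card + 1) :
    IsConsecutive p 1 T.card (T.image (phi (eS p 1))) := by
  have hSne : (T.image Prod.fst).Nonempty := hne.image _
  have hcard := line_image_card hline
  obtain ⟨a, hS⟩ := interval_of_dense hSne (by rw [hcard, ← line_HB_card hline]; exact hHB)
  rw [isConsecutive_iff]
  refine ⟨phi (eS p 1) (a, 0), phi_mem_bLFS_iff.mpr rfl, ?_⟩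
  have hT : T = (T.image Prod.fst).image (fun α => ((α, 0) : ℤ × ℕ)) := by
    ext x
    constructor
    · intro hx
      refine Finset.mem_image.mpr ⟨x.1, Finset.mem_image_of_mem _ hx, ?_⟩
      exact Prod.ext rfl (hline x hx).symm
    · intro hx
      obtain ⟨α, hα, rfl⟩ := Finset.mem_image.mp hx
      exact (line_mem hline).mp hα
  rw [hcard] at hS
  conv_lhs => rw [hT, hS]
  rw [Finset.image_image, Finset.image_image, chainPt]
  apply Finset.image_congr
  intro i _
  show phi (eS p 1) (a + (i : ℤ), 0) = phi (eS p 1) (a, 0) + ((i : ℕ) : ℝ) • t1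
  rw [chain_pt_eq]
  refine Prod.ext ?_ ?_ <;> simp [phi] <;> push_cast <;> ring

end Transfer
/-- for `q = 1`, the consecutive wetting configurations are the
(strict) minimizers for every `n` iff `c_S ≥ 4 c_F`. -/
theorem wetting_regime_q_eq_one
    (cF cS : ℝ) (hcF : 0 < cF) (hcS : 0 < cS)
    (p q : ℕ) (hp : 0 < p) (hq : 0 < q) (hpq : Nat.Coprime p q) (hq1 : q = 1) :
    4 * cF ≤ cS ↔
      ∀ n : ℕ, ∀ Dw : Finset Pt, IsConsecutive p q n Dw →
        ((∀ D ∈ Cn p q n, Vn cF cS p q Dw ≤ Vn cF cS p q D) ∧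
          (∀ D ∈ Cn p q n,
            ((∃ x ∈ D, x ∉ bLFS p q) ∨ (↑D ⊆ bLFS p q ∧ ¬ IsConsecutive p q n D)) →
            Vn cF cS p q Dw < Vn cF cS p q D)) := by
  subst hq1
  constructor
  · intro hcs n Dw hDw
    obtain ⟨w, hw, hDweq⟩ := isConsecutive_iff.mp hDw
    subst hDweq
    have hVw : Vn cF cS p 1 (chainPt w n)
        = (((if n = 0 then 0 else -(2*cF) * ((n:ℝ)-1) - cS*n) : ℝ) : EReal) := by
      rw [Vn_eq_realVn_of_LF (chainPt_subset_LF hw n), realVn_chain hw n]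
    constructor
    · intro D hD
      obtain ⟨hDLF, hcard⟩ := hD
      obtain ⟨T, hTim, hTcard⟩ := exists_T hDLF
      have hVD : Vn cF cS p 1 D = (((-cF * NN T - cS * lineS T : ℝ)) : EReal) := by
        rw [Vn_eq_realVn_of_LF hDLF, ← hTim, realVn_image]
      rw [hVw, hVD, EReal.coe_le_coe_iff]
      have hn : T.card = n := by rw [hTcard, hcard]
      by_cases h0 : n = 0
      · subst h0
        have hT0 : T = ∅ := Finset.card_eq_zero.mp hn
        subst hT0
        simp [NN, lineS]
      · rw [if_neg h0]
        have hTne : T.Nonempty := Finset.card_pos.mp (by omega)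
        have b1 := NN_bound (T := T)
        have b2 := levs_pos hTne
        have b3 := lineS_le_Lmin (T := T)
        have b4 := lineS_le_card (T := T)
        rw [hn] at b1 b4
        have r1 : (NN T : ℝ) + 2 * ((levs T).card : ℝ) + 4 * (Lmin T : ℝ)
            ≤ 6 * (n:ℝ) := by exact_mod_cast b1
        have r2 : (1:ℝ) ≤ ((levs T).card : ℝ) := by exact_mod_cast b2
        have r3 : ((lineS T : ℝ)) ≤ (Lmin T : ℝ) := by exact_mod_cast b3
        have r4 : ((lineS T : ℝ)) ≤ (n : ℝ) := by exact_mod_cast b4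
        have hNNle : (NN T : ℝ) ≤ 6*(n:ℝ) - 2 - 4*(lineS T : ℝ) := by linarith
        have key := mul_le_mul_of_nonneg_left hNNle hcF.le
        have key2 : 4*cF*((n:ℝ) - lineS T) ≤ cS * ((n:ℝ) - lineS T) :=
          mul_le_mul_of_nonneg_right hcs (by linarith)
        nlinarith [key, key2]
    · intro D hD hbad
      obtain ⟨hDLF, hcard⟩ := hD
      by_cases h0 : n = 0
      · exfalso
        subst h0
        have hDempty : D = ∅ := Finset.card_eq_zero.mp hcard
        subst hDempty
        rcases hbad with ⟨x, hx, _⟩ | ⟨_, hnc⟩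
        · exact absurd hx (Finset.notMem_empty x)
        · apply hnc
          rw [isConsecutive_iff]
          exact ⟨w, hw, by simp [chainPt]⟩
      obtain ⟨T, hTim, hTcard⟩ := exists_T hDLF
      have hVD : Vn cF cS p 1 D = (((-cF * NN T - cS * lineS T : ℝ)) : EReal) := by
        rw [Vn_eq_realVn_of_LF hDLF, ← hTim, realVn_image]
      rw [hVw, hVD, if_neg h0, EReal.coe_lt_coe_iff]
      have hn : T.card = n := by rw [hTcard, hcard]
      have hTne : T.Nonempty := Finset.card_pos.mp (by omega)
      have hn1 : (1:ℝ) ≤ (n:ℝ) := by exact_mod_cast Nat.one_le_iff_ne_zero.mpr h0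
      have b1 := NN_bound (T := T)
      have b2 := levs_pos hTne
      have b3 := lineS_le_Lmin (T := T)
      have b4 := lineS_le_card (T := T)
      rw [hn] at b1 b4
      have r1 : (NN T : ℝ) + 2 * ((levs T).card : ℝ) + 4 * (Lmin T : ℝ)
          ≤ 6 * (n:ℝ) := by exact_mod_cast b1
      have r2 : (1:ℝ) ≤ ((levs T).card : ℝ) := by exact_mod_cast b2
      have r3 : ((lineS T : ℝ)) ≤ (Lmin T : ℝ) := by exact_mod_cast b3
      have r4 : ((lineS T : ℝ)) ≤ (n : ℝ) := by exact_mod_cast b4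
      rcases hbad with ⟨x, hxD, hxnb⟩ | ⟨hDb, hnc⟩
      · obtain ⟨k, hkT, hkeq⟩ : ∃ k ∈ T, phi (eS p 1) k = x := by
          rw [← hTim] at hxD
          exact Finset.mem_image.mp hxD
        have hk2 : k.2 ≠ 0 := fun h => hxnb (hkeq ▸ phi_mem_bLFS_iff.mpr h)
        by_cases hs : lineS T = 0
        · have r5 : (1:ℝ) ≤ (Lmin T : ℝ) := by exact_mod_cast Lmin_pos hTne
          have rs0 : ((lineS T : ℝ)) = 0 := by rw [hs]; norm_num
          have hNNle : (NN T : ℝ) ≤ 6*(n:ℝ) - 6 := by linarith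
          have key := mul_le_mul_of_nonneg_left hNNle hcF.le
          have key2 : 4*cF*(n:ℝ) ≤ cS * (n:ℝ) :=
            mul_le_mul_of_nonneg_right hcs (by linarith)
          nlinarith [key, key2]
        · have hex : ∃ y ∈ T, y.2 = 0 := by
            have hne : (T.filter fun k => k.2 = 0).Nonempty := by
              rw [← Finset.card_pos]
              unfold lineS at hs
              omega
            obtain ⟨y, hy⟩ := hne
            rw [Finset.mem_filter] at hy
            exact ⟨y, hy.1, hy.2⟩
          obtain ⟨y, hyT, hy2⟩ := hex
          have r5 : (2:ℝ) ≤ ((levs T).card : ℝ) := by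
            exact_mod_cast levs_two hyT hkT hy2 hk2
          have hNNle : (NN T : ℝ) ≤ 6*(n:ℝ) - 4 - 4*(lineS T : ℝ) := by linarith
          have key := mul_le_mul_of_nonneg_left hNNle hcF.le
          have key2 : 4*cF*((n:ℝ) - lineS T) ≤ cS * ((n:ℝ) - lineS T) :=
            mul_le_mul_of_nonneg_right hcs (by linarith)
          nlinarith [key, key2]
      · have hlineT : ∀ k ∈ T, k.2 = 0 := by
          intro k hk
          have hmem : phi (eS p 1) k ∈ D := by
            rw [← hTim]
            exact Finset.mem_image_of_mem _ hk
          exact phi_mem_bLFS_iff.mp (hDb hmem)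
        have hHBlt : (HBs T).card + 2 ≤ n := by
          by_contra hcon
          push_neg at hcon
          apply hnc
          have hc := consecutive_of_dense (p := p) hTne hlineT (by omega)
          rw [hn, hTim] at hc
          exact hc
        have hFU : (FUs T) = ∅ := by
          rw [Finset.eq_empty_iff_forall_notMem]
          intro e he
          rw [FUs, Finset.mem_filter, Finset.mem_offDiag] at he
          obtain ⟨⟨h1, h2, _⟩, _, hl⟩ := he
          have e1 := hlineT _ h1
          have e2 := hlineT _ h2
          omega
        have hNNval : NN T = 2 * (HBs T).card := by
          rw [NN_eq, hFU]
          simp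
        have hsn : lineS T = n := by
          rw [lineS, Finset.filter_true_of_mem hlineT, hn]
        have rNN : (NN T : ℝ) = 2 * ((HBs T).card : ℝ) := by exact_mod_cast hNNval
        have rHB : ((HBs T).card : ℝ) ≤ (n:ℝ) - 2 := by
          have : ((HBs T).card : ℝ) + 2 ≤ (n:ℝ) := by exact_mod_cast hHBlt
          linarith
        have rsn : ((lineS T : ℝ)) = (n:ℝ) := by exact_mod_cast hsn
        nlinarith [mul_le_mul_of_nonneg_left rHB hcF.le]
  · intro hmin
    by_contra hlt
    push_neg at hlt
    have hw0 : ((((0:ℤ):ℝ) * ((1:ℕ):ℝ), eS p 1) : Pt) ∈ bLFS p 1 := ⟨0, rfl⟩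
    set w0 : Pt := ((((0:ℤ):ℝ) * ((1:ℕ):ℝ), eS p 1) : Pt) with hw0def
    have key : ∀ m : ℕ, 1 ≤ m → 4*cF*(m:ℝ) - 4*cF ≤ cS * m := by
      intro m hm
      have hcons : IsConsecutive p 1 (2*m) (chainPt w0 (2*m)) :=
        isConsecutive_iff.mpr ⟨w0, hw0, rfl⟩
      have h := (hmin (2*m) (chainPt w0 (2*m)) hcons).1 (twoRow p m)
        ⟨twoRow_subset_LF p m, twoRow_card p m⟩
      rw [Vn_eq_realVn_of_LF (chainPt_subset_LF hw0 (2*m)),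
        Vn_eq_realVn_of_LF (twoRow_subset_LF p m), EReal.coe_le_coe_iff,
        realVn_chain hw0 (2*m), realVn_twoRow cF cS p m] at h
      rw [if_neg (by omega), if_neg (by omega)] at h
      push_cast at h
      linarith
    obtain ⟨m, hm⟩ := exists_nat_gt (4*cF / (4*cF - cS))
    have hδ : 0 < 4*cF - cS := by linarith
    have hpos : 0 < 4*cF / (4*cF - cS) := by positivity
    have hm1 : 1 ≤ m := by
      by_contra h
      push_neg at h
      have : m = 0 := by omega
      subst this
      simp at hm
      linarith
    have hk := key m hm1
    have hd := (div_lt_iff₀ hδ).mp hm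
    nlinarith [hk, hd]
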